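/- Let k be a positive integer and let G be a finite simple k-degenerate graph with maximum degree Δ = Δ(G) > 1. Then there exists a finite simple k-degenerate graph G* that is (Δ,1)-regular (every vertex of G* has degree exactly Δ or exactly 1) and contains G as a subgraph; consequently the linear arboricity of G is at most that of G*. -/

import Mathlib

/-- A linear forest: a graph in which every connected component is a path,
equivalently every vertex has degree at most 2 and there are no cycles. -/
def IsLinearForest {V : Type*} (G : SimpleGraph V) : Prop :=
  G.IsAcyclic ∧ ∀ v : V, (G.neighborSet v).ncard ≤ 2

/-- A partition of the edge set of `G` into `t` linear forests (viewed as
spanning subgraphs). -/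
def IsLinearForestPartition {V : Type*} (G : SimpleGraph V) (t : ℕ)
    (F : Fin t → SimpleGraph V) : Prop :=
  (∀ i, IsLinearForest (F i)) ∧
  (Pairwise fun i j : Fin t => Disjoint (F i).edgeSet (F j).edgeSet) ∧
  (⋃ i, (F i).edgeSet) = G.edgeSet

/-- `G` is `k`-degenerate: every (nonempty) subgraph of `G` has a vertex of
degree at most `k`. -/
def KDegenerate {V : Type*} (G : SimpleGraph V) (k : ℕ) : Prop :=
  ∀ H : G.Subgraph, H.verts.Nonempty → ∃ v ∈ H.verts, (H.neighborSet v).ncard ≤ k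

/-- The linear arboricity of `G`: the minimum number of linear forests needed
to partition the edge set of `G`. -/
noncomputable def linearArboricity {V : Type*} (G : SimpleGraph V) : ℕ :=
  sInf {t : ℕ | ∃ F : Fin t → SimpleGraph V, IsLinearForestPartition G t F}

/- ### Auxiliary lemmas -/

private lemma lf_single {W : Type*} (e : Sym2 W) (he : ¬ e.IsDiag) :
    IsLinearForest (SimpleGraph.fromEdgeSet {e}) := by
  induction e using Sym2.ind with
  | _ x y =>
  rw [Sym2.mk_isDiag_iff] at he
  constructor
  · intro v c hc
    have h3 := hc.three_le_length
    have hnd := hc.edges_nodup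
    have hall : ∀ f ∈ c.edges, f = s(x, y) := by
      intro f hf
      have := c.edges_subset_edgeSet hf
      rw [SimpleGraph.edgeSet_fromEdgeSet] at this
      exact this.1
    have hlen : c.edges.length = c.length := c.length_edges
    rcases hE : c.edges with _ | ⟨a, _ | ⟨b, l⟩⟩
    · rw [hE] at hlen; simp at hlen; omega
    · rw [hE] at hlen; simp at hlen; omega
    · rw [hE] at hnd hall
      have ha := hall a (by simp)
      have hb := hall b (by simp)
      have : a ∉ b :: l := (List.nodup_cons.mp hnd).1
      exact this (by rw [ha, hb]; exact List.mem_cons_self)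
  · intro v
    have hsub : (SimpleGraph.fromEdgeSet {s(x, y)}).neighborSet v ⊆ {x, y} := by
      intro w hw
      rw [SimpleGraph.mem_neighborSet, SimpleGraph.fromEdgeSet_adj] at hw
      have := hw.1
      simp only [Set.mem_singleton_iff, Sym2.eq_iff] at this
      rcases this with ⟨_, rfl⟩ | ⟨_, rfl⟩ <;> simp
    calc ((SimpleGraph.fromEdgeSet {s(x, y)}).neighborSet v).ncard
        ≤ ({x, y} : Set W).ncard := Set.ncard_le_ncard hsub (Set.toFinite _)
      _ ≤ ({y} : Set W).ncard + 1 := Set.ncard_insert_le _ _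
      _ ≤ 2 := by rw [Set.ncard_singleton]

private lemma exists_partition {W : Type*} [Fintype W] (H : SimpleGraph W) :
    ∃ t F, IsLinearForestPartition H t F := by
  classical
  have hfin : H.edgeSet.Finite := Set.toFinite _
  have : Fintype H.edgeSet := hfin.fintype
  let q : H.edgeSet ≃ Fin (Fintype.card H.edgeSet) := Fintype.equivFin _
  let g : Fin (Fintype.card H.edgeSet) → Sym2 W := fun i => (q.symm i : Sym2 W)
  have hgmem : ∀ i, g i ∈ H.edgeSet := fun i => (q.symm i).2
  have hginj : Function.Injective g :=
    fun i j h => q.symm.injective (Subtype.ext h)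
  have hES : ∀ i, (SimpleGraph.fromEdgeSet {g i}).edgeSet = {g i} := by
    intro i
    rw [SimpleGraph.edgeSet_fromEdgeSet]
    have := SimpleGraph.not_isDiag_of_mem_edgeSet H (hgmem i)
    ext f
    simp only [Set.mem_diff, Set.mem_singleton_iff, Set.mem_setOf_eq]
    constructor
    · exact fun h => h.1
    · rintro rfl; exact ⟨rfl, this⟩
  refine ⟨Fintype.card H.edgeSet, fun i => SimpleGraph.fromEdgeSet {g i}, ?_, ?_, ?_⟩
  · exact fun i => lf_single _ (SimpleGraph.not_isDiag_of_mem_edgeSet H (hgmem i))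
  · intro i j hij
    rw [hES, hES, Set.disjoint_singleton_left, Set.mem_singleton_iff]
    exact fun h => hij (hginj h)
  · ext f
    simp only [Set.mem_iUnion, hES, Set.mem_singleton_iff]
    constructor
    · rintro ⟨i, rfl⟩; exact hgmem i
    · intro hf
      exact ⟨q ⟨f, hf⟩, by simp [g]⟩

private lemma partition_pullback {V W : Type*} [Fintype W] (G : SimpleGraph V)
    (G' : SimpleGraph W) (f : V → W) (hf : Function.Injective f)
    (hadj : ∀ u v, G.Adj u v → G'.Adj (f u) (f v))
    (t : ℕ) (F : Fin t → SimpleGraph W) (hF : IsLinearForestPartition G' t F) :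
    ∃ F', IsLinearForestPartition G t F' := by
  obtain ⟨hlf, hdisj, huni⟩ := hF
  let F' : Fin t → SimpleGraph V := fun i =>
    { Adj := fun u v => G.Adj u v ∧ (F i).Adj (f u) (f v)
      symm := ⟨fun u v h => ⟨h.1.symm, h.2.symm⟩⟩
      loopless := ⟨fun v h => G.loopless.irrefl v h.1⟩ }
  have hF'adj : ∀ i u v, (F' i).Adj u v ↔ G.Adj u v ∧ (F i).Adj (f u) (f v) :=
    fun i u v => Iff.rfl
  refine ⟨F', ?_, ?_, ?_⟩
  · intro i
    constructor
    · intro v c hc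
      let φ : F' i →g F i := ⟨f, fun h => h.2⟩
      have hφ : Function.Injective (φ : V → W) := hf
      exact (hlf i).1 (c.map φ) ((SimpleGraph.Walk.map_isCycle_iff_of_injective hφ).mpr hc)
    · intro v
      have hsub : f '' ((F' i).neighborSet v) ⊆ (F i).neighborSet (f v) := by
        rintro _ ⟨u, hu, rfl⟩; exact hu.2
      calc ((F' i).neighborSet v).ncard
          = (f '' ((F' i).neighborSet v)).ncard :=
            (Set.ncard_image_of_injective _ hf).symm
        _ ≤ ((F i).neighborSet (f v)).ncard := Set.ncard_le_ncard hsub (Set.toFinite _)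
        _ ≤ 2 := (hlf i).2 (f v)
  · intro i j hij
    rw [Set.disjoint_left]
    intro e he1 he2
    induction e using Sym2.ind with
    | _ u v =>
    rw [SimpleGraph.mem_edgeSet] at he1 he2
    exact Set.disjoint_left.mp (hdisj hij)
      (SimpleGraph.mem_edgeSet _ |>.mpr he1.2) (SimpleGraph.mem_edgeSet _ |>.mpr he2.2)
  · ext e
    induction e using Sym2.ind with
    | _ u v =>
    simp only [Set.mem_iUnion, SimpleGraph.mem_edgeSet]
    constructor
    · rintro ⟨i, h, -⟩; exact h
    · intro h
      have : s(f u, f v) ∈ G'.edgeSet := (SimpleGraph.mem_edgeSet _).mpr (hadj _ _ h)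
      rw [← huni, Set.mem_iUnion] at this
      obtain ⟨i, hi⟩ := this
      exact ⟨i, h, (SimpleGraph.mem_edgeSet _).mp hi⟩

private lemma degenerate_transport {V W : Type*} (G : SimpleGraph V) (G' : SimpleGraph W)
    (e : V ≃ W) (hadj : ∀ u v, G.Adj u v ↔ G'.Adj (e u) (e v)) (k : ℕ)
    (hdeg : KDegenerate G k) : KDegenerate G' k := by
  intro H hne
  set H₀ : G.Subgraph :=
    { verts := e ⁻¹' H.verts
      Adj := fun u v => H.Adj (e u) (e v)
      adj_sub := fun h => (hadj _ _).mpr (H.adj_sub h)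
      edge_vert := fun h => H.edge_vert h
      symm := ⟨fun u v h => h.symm⟩ } with hH₀
  have hne₀ : H₀.verts.Nonempty := by
    obtain ⟨x, hx⟩ := hne
    exact ⟨e.symm x, by simp [hH₀, hx]⟩
  obtain ⟨v, hv, hcard⟩ := hdeg H₀ hne₀
  refine ⟨e v, hv, ?_⟩
  have him : H.neighborSet (e v) = e '' H₀.neighborSet v := by
    ext w
    simp only [SimpleGraph.Subgraph.mem_neighborSet, Set.mem_image, hH₀]
    constructor
    · intro h; exact ⟨e.symm w, by simpa using h, by simp⟩
    · rintro ⟨u, hu, rfl⟩; exact hu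
  rw [him, Set.ncard_image_of_injective _ e.injective]
  exact hcard

private lemma ncard_neighborSet_eq_degree {V : Type*} [Fintype V] (G : SimpleGraph V)
    [DecidableRel G.Adj] (v : V) : (G.neighborSet v).ncard = G.degree v := by
  rw [← SimpleGraph.card_neighborSet_eq_degree, ← Nat.card_coe_set_eq,
    Nat.card_eq_fintype_card]

private lemma pad_construction {U : Type} [Fintype U] [DecidableEq U] (G : SimpleGraph U)
    (k D : ℕ) (hk : 1 ≤ k) (hdeg : KDegenerate G k)
    (hD : ∀ v, (G.neighborSet v).ncard ≤ D) :
    ∃ (W : Type) (_ : Fintype W) (G' : SimpleGraph W) (f : U ↪ W),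
      (∀ u v, G.Adj u v → G'.Adj (f u) (f v)) ∧
      KDegenerate G' k ∧
      (∀ w, (G'.neighborSet w).ncard = D ∨ (G'.neighborSet w).ncard = 1) := by
  classical
  set d : U → ℕ := fun v => D - (G.neighborSet v).ncard with hd
  set W := U ⊕ (Σ v : U, Fin (d v)) with hW
  set G' : SimpleGraph W :=
    { Adj := fun x y => match x, y with
        | .inl u, .inl v => G.Adj u v
        | .inl u, .inr p => p.1 = u
        | .inr p, .inl u => p.1 = u
        | .inr _, .inr _ => False
      symm := ⟨by
        rintro (u | p) (v | q) h
        · exact h.symm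
        · exact h
        · exact h
        · exact h.elim⟩
      loopless := ⟨by
        rintro (u | p) h
        · exact G.loopless.irrefl u h
        · exact h⟩ } with hG'
  have hAdj_inl : ∀ u v : U, G'.Adj (.inl u) (.inl v) ↔ G.Adj u v := fun u v => Iff.rfl
  have hnbr_inl : ∀ v : U, G'.neighborSet (.inl v) =
      (Sum.inl '' G.neighborSet v) ∪ (Sum.inr '' {p : Σ w : U, Fin (d w) | p.1 = v}) := by
    intro v
    ext x
    rcases x with u | p
    · simp only [SimpleGraph.mem_neighborSet, Set.mem_union, Set.mem_image]
      constructor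
      · intro h; exact Or.inl ⟨u, h, rfl⟩
      · rintro (⟨w, hw, hww⟩ | ⟨q, -, hq⟩)
        · cases hww; exact hw
        · exact (Sum.inl_ne_inr hq.symm).elim
    · simp only [SimpleGraph.mem_neighborSet, Set.mem_union, Set.mem_image]
      constructor
      · intro h; exact Or.inr ⟨p, h, rfl⟩
      · rintro (⟨w, -, hww⟩ | ⟨q, hq, hqq⟩)
        · exact (Sum.inl_ne_inr hww).elim
        · cases hqq; exact hq
  have hnbr_inr : ∀ p : Σ w : U, Fin (d w),
      G'.neighborSet (.inr p) = {Sum.inl p.1} := by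
    intro p
    ext x
    rcases x with u | q
    · simp only [SimpleGraph.mem_neighborSet, Set.mem_singleton_iff]
      constructor
      · intro h; exact congrArg Sum.inl (show p.1 = u from h).symm
      · intro h; cases h; rfl
    · simp only [SimpleGraph.mem_neighborSet, Set.mem_singleton_iff]
      constructor
      · intro h; exact h.elim
      · intro h; exact (Sum.inl_ne_inr h.symm).elim
  have hfiber : ∀ v : U, ({p : Σ w : U, Fin (d w) | p.1 = v}).ncard = d v := by
    intro v
    have hrange : {p : Σ w : U, Fin (d w) | p.1 = v} =
        Set.range (@Sigma.mk U (fun w => Fin (d w)) v) := by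
      ext ⟨w, i⟩
      simp only [Set.mem_setOf_eq, Set.mem_range]
      constructor
      · rintro rfl; exact ⟨i, rfl⟩
      · rintro ⟨j, h⟩; cases h; rfl
    rw [hrange, ← Set.image_univ, Set.ncard_image_of_injective _ sigma_mk_injective,
      Set.ncard_univ, Nat.card_eq_fintype_card, Fintype.card_fin]
  refine ⟨W, inferInstance, G', ⟨Sum.inl, Sum.inl_injective⟩, ?_, ?_, ?_⟩
  · exact fun u v h => h
  · -- degeneracy
    intro H hne
    by_cases hleaf : ∃ p, Sum.inr p ∈ H.verts
    · obtain ⟨p, hp⟩ := hleaf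
      refine ⟨.inr p, hp, ?_⟩
      calc (H.neighborSet (.inr p)).ncard
          ≤ (G'.neighborSet (.inr p)).ncard :=
            Set.ncard_le_ncard (H.neighborSet_subset _) (Set.toFinite _)
        _ = 1 := by rw [hnbr_inr]; exact Set.ncard_singleton _
        _ ≤ k := hk
    · push_neg at hleaf
      set H₀ : G.Subgraph :=
        { verts := Sum.inl ⁻¹' H.verts
          Adj := fun u v => H.Adj (.inl u) (.inl v)
          adj_sub := fun h => H.adj_sub h
          edge_vert := fun h => H.edge_vert h
          symm := ⟨fun u v h => h.symm⟩ } with hH₀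
      have hne₀ : H₀.verts.Nonempty := by
        obtain ⟨x, hx⟩ := hne
        rcases x with u | p
        · exact ⟨u, hx⟩
        · exact absurd hx (hleaf p)
      obtain ⟨v, hv, hcard⟩ := hdeg H₀ hne₀
      refine ⟨.inl v, hv, ?_⟩
      have hsub : H.neighborSet (.inl v) ⊆ Sum.inl '' H₀.neighborSet v := by
        intro x hx
        rcases x with u | p
        · exact ⟨u, hx, rfl⟩
        · exact absurd (H.edge_vert hx.symm) (hleaf p)
      calc (H.neighborSet (.inl v)).ncard
          ≤ (Sum.inl '' H₀.neighborSet v).ncard :=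
            Set.ncard_le_ncard hsub (Set.toFinite _)
        _ = (H₀.neighborSet v).ncard := Set.ncard_image_of_injective _ Sum.inl_injective
        _ ≤ k := hcard
  · -- degree condition
    intro w
    rcases w with v | p
    · left
      rw [hnbr_inl]
      have hdisj : Disjoint (Sum.inl '' G.neighborSet v)
          (Sum.inr '' {p : Σ w : U, Fin (d w) | p.1 = v}) := by
        rw [Set.disjoint_left]
        rintro x ⟨u, -, rfl⟩ ⟨q, -, hq⟩
        exact Sum.inl_ne_inr hq.symm
      rw [Set.ncard_union_eq hdisj (Set.toFinite _) (Set.toFinite _),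
        Set.ncard_image_of_injective _ Sum.inl_injective,
        Set.ncard_image_of_injective _ Sum.inr_injective, hfiber]
      have := hD v
      simp only [hd]
      omega
    · right
      rw [hnbr_inr]
      exact Set.ncard_singleton _

/-- Every `k`-degenerate graph `G` with maximum degree `Δ > 1` is contained,
as a subgraph, in a `k`-degenerate `(Δ,1)`-regular graph `G*`; consequently
`la(G) ≤ la(G*)`. -/
theorem exists_regular_degenerate_supergraph
    {V : Type*} [Fintype V] [DecidableEq V] (G : SimpleGraph V) [DecidableRel G.Adj]
    (k : ℕ) (hk : 1 ≤ k) (hdegen : KDegenerate G k) (hΔ : 1 < G.maxDegree) :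
    ∃ (W : Type) (_ : Fintype W) (G' : SimpleGraph W) (f : V ↪ W),
      (∀ u v : V, G.Adj u v → G'.Adj (f u) (f v)) ∧
      KDegenerate G' k ∧
      (∀ w : W, (G'.neighborSet w).ncard = G.maxDegree ∨ (G'.neighborSet w).ncard = 1) ∧
      linearArboricity G ≤ linearArboricity G' := by
  classical
  set n := Fintype.card V with hn
  set e : V ≃ Fin n := Fintype.equivFin V with he
  set G₀ : SimpleGraph (Fin n) := SimpleGraph.comap e.symm G with hG₀
  have hadj₀ : ∀ u v : V, G.Adj u v ↔ G₀.Adj (e u) (e v) := by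
    intro u v; simp [hG₀, SimpleGraph.comap]
  have hdeg₀ : KDegenerate G₀ k := degenerate_transport G G₀ e hadj₀ k hdegen
  have hnbr₀ : ∀ i : Fin n, G₀.neighborSet i = e.symm ⁻¹' (G.neighborSet (e.symm i)) := by
    intro i; rfl
  have hD : ∀ i : Fin n, (G₀.neighborSet i).ncard ≤ G.maxDegree := by
    intro i
    rw [hnbr₀, ← Equiv.image_eq_preimage_symm, Set.ncard_image_of_injective _ e.injective,
      ncard_neighborSet_eq_degree]
    exact G.degree_le_maxDegree (e.symm i)
  obtain ⟨W, instW, G', f₀, hadj', hdeg', hreg'⟩ :=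
    pad_construction G₀ k G.maxDegree hk hdeg₀ hD
  refine ⟨W, instW, G', ⟨f₀ ∘ e, f₀.injective.comp e.injective⟩, ?_, hdeg', hreg', ?_⟩
  · intro u v h
    exact hadj' (e u) (e v) ((hadj₀ u v).mp h)
  · -- linear arboricity
    have hne : {t : ℕ | ∃ F : Fin t → SimpleGraph W, IsLinearForestPartition G' t F}.Nonempty := by
      obtain ⟨t, F, hF⟩ := exists_partition G'
      exact ⟨t, F, hF⟩
    have hmem := Nat.sInf_mem hne
    obtain ⟨F, hF⟩ := hmem
    obtain ⟨F', hF'⟩ := partition_pullback G G' (f₀ ∘ e)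
      (f₀.injective.comp e.injective)
      (fun u v h => hadj' (e u) (e v) ((hadj₀ u v).mp h)) _ F hF
    exact Nat.sInf_le ⟨F', hF'⟩
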